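/- For two option sets with the same intra-option policies and policy over options but with termination functions satisfying β̃_w(s) ≤ β_w(s) for all options w and states s, the induced termination matrices satisfy Ñ ≤ N entrywise, and hence ρ(M̃^{-1}Ñ) ≤ ρ(M^{-1}N) < 1. -/

import Mathlib

open Matrix Filter
open scoped ENNReal NNReal

/-- The spectral radius of a real matrix: the supremum of the moduli of its
complex eigenvalues (elements of the spectrum of the complexified matrix). -/
noncomputable def specRad {m : Type*} [Fintype m] [DecidableEq m]
    (A : Matrix m m ℝ) : ℝ :=
  sSup {x : ℝ | ∃ μ : ℂ, μ ∈ spectrum ℂ (A.map (algebraMap ℝ ℂ)) ∧ x = ‖μ‖}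

section helpers
variable {n : Type*} [Fintype n] [DecidableEq n]

attribute [local instance] Matrix.linftyOpNormedRing Matrix.linftyOpNormedAlgebra
  Matrix.linftyOpNormedAddCommGroup

local notation "𝕔" => algebraMap ℝ ℂ

lemma specRad_set_eq (A : Matrix n n ℝ) :
    {x : ℝ | ∃ μ : ℂ, μ ∈ spectrum ℂ (A.map 𝕔) ∧ x = ‖μ‖}
      = (fun μ : ℂ => ‖μ‖) '' spectrum ℂ (A.map 𝕔) := by
  ext x; constructor
  · rintro ⟨μ, hμ, rfl⟩; exact ⟨μ, hμ, rfl⟩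
  · rintro ⟨μ, hμ, rfl⟩; exact ⟨μ, hμ, rfl⟩

lemma specRad_nonneg (A : Matrix n n ℝ) : 0 ≤ specRad A := by
  apply Real.sSup_nonneg
  rintro x ⟨μ, _, rfl⟩; exact norm_nonneg μ

lemma norm_le_specRad_of_mem {A : Matrix n n ℝ} {μ : ℂ}
    (h : μ ∈ spectrum ℂ (A.map 𝕔)) : ‖μ‖ ≤ specRad A := by
  refine le_csSup ?_ ⟨μ, h, rfl⟩
  rw [specRad_set_eq]
  exact ((spectrum.isCompact (A.map 𝕔)).image continuous_norm).bddAbove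

lemma exists_norm_eq_specRad [Nonempty n] (A : Matrix n n ℝ) :
    ∃ μ ∈ spectrum ℂ (A.map 𝕔), ‖μ‖ = specRad A := by
  have hne : (spectrum ℂ (A.map 𝕔)).Nonempty := spectrum.nonempty _
  have hc : IsCompact ((fun μ : ℂ => ‖μ‖) '' spectrum ℂ (A.map 𝕔)) :=
    (spectrum.isCompact (A.map 𝕔)).image continuous_norm
  have := hc.sSup_mem (hne.image _)
  rw [← specRad_set_eq] at this
  obtain ⟨μ, hμ, hx⟩ := this
  exact ⟨μ, hμ, hx.symm⟩

lemma mem_spectrum_iff_det (X : Matrix n n ℂ) (z : ℂ) :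
    z ∈ spectrum ℂ X ↔ (z • (1 : Matrix n n ℂ) - X).det = 0 := by
  rw [spectrum.mem_iff, Algebra.algebraMap_eq_smul_one]
  rw [show IsUnit (z • (1 : Matrix n n ℂ) - X) ↔ IsUnit (z • (1 : Matrix n n ℂ) - X).det from
    (Matrix.isUnit_iff_isUnit_det _), isUnit_iff_ne_zero, not_not]

lemma spectralRadius_le_ofReal (A : Matrix n n ℝ) :
    spectralRadius ℂ (A.map 𝕔) ≤ ENNReal.ofReal (specRad A) := by
  rw [spectralRadius]
  refine iSup₂_le fun μ hμ => ?_
  have h1 : ‖μ‖ ≤ specRad A := norm_le_specRad_of_mem hμ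
  rw [← enorm_eq_nnnorm, ← ofReal_norm]
  exact ENNReal.ofReal_le_ofReal h1





lemma map_pow_c (X : Matrix n n ℝ) (k : ℕ) : (X ^ k).map 𝕔 = (X.map 𝕔) ^ k := by
  have : ∀ Y : Matrix n n ℝ, Y.map 𝕔 = (𝕔 : ℝ →+* ℂ).mapMatrix Y := fun _ => rfl
  rw [this, this, map_pow]

lemma nnnorm_map_c (X : Matrix n n ℝ) : ‖X.map 𝕔‖₊ = ‖X‖₊ := by
  rw [Matrix.linfty_opNNNorm_def, Matrix.linfty_opNNNorm_def]
  simp [Matrix.map_apply]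

lemma entry_le_nnnorm (X : Matrix n n ℝ) (i j : n) : ‖X i j‖₊ ≤ ‖X‖₊ := by
  rw [Matrix.linfty_opNNNorm_def]
  refine le_trans (Finset.single_le_sum (f := fun j => ‖X i j‖₊) (fun j _ => zero_le)
    (Finset.mem_univ j)) ?_
  exact Finset.le_sup (f := fun i => ∑ j, ‖X i j‖₊) (Finset.mem_univ i)

lemma mul_entry_nonneg {X Y : Matrix n n ℝ} (hX : ∀ i j, 0 ≤ X i j)
    (hY : ∀ i j, 0 ≤ Y i j) : ∀ i j, 0 ≤ (X * Y) i j := fun i j => by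
  rw [Matrix.mul_apply]
  exact Finset.sum_nonneg fun k _ => mul_nonneg (hX i k) (hY k j)

lemma pow_entry_nonneg {X : Matrix n n ℝ} (hX : ∀ i j, 0 ≤ X i j) (k : ℕ) :
    ∀ i j, 0 ≤ (X ^ k) i j := by
  induction k with
  | zero => intro i j; simp [Matrix.one_apply]; split <;> simp
  | succ m ih => rw [pow_succ]; exact mul_entry_nonneg ih hX

lemma pow_entry_le {X Y : Matrix n n ℝ} (hX : ∀ i j, 0 ≤ X i j)
    (hXY : ∀ i j, X i j ≤ Y i j) (k : ℕ) : ∀ i j, (X ^ k) i j ≤ (Y ^ k) i j := by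
  have hY : ∀ i j, 0 ≤ Y i j := fun i j => le_trans (hX i j) (hXY i j)
  induction k with
  | zero => intro i j; simp
  | succ m ih =>
      intro i j
      rw [pow_succ, pow_succ, Matrix.mul_apply, Matrix.mul_apply]
      refine Finset.sum_le_sum fun l _ => ?_
      exact mul_le_mul (ih i l) (hXY l j) (hX l j) (le_trans (pow_entry_nonneg hX m i l) (ih i l))

lemma nnnorm_le_of_entry_le {X Y : Matrix n n ℝ} (hX : ∀ i j, 0 ≤ X i j)
    (hXY : ∀ i j, X i j ≤ Y i j) : ‖X‖₊ ≤ ‖Y‖₊ := by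
  rw [Matrix.linfty_opNNNorm_def, Matrix.linfty_opNNNorm_def]
  refine Finset.sup_mono_fun fun i _ => ?_
  refine Finset.sum_le_sum fun j _ => ?_
  have h1 : |X i j| ≤ |Y i j| := by
    rw [abs_of_nonneg (hX i j), abs_of_nonneg (le_trans (hX i j) (hXY i j))]
    exact hXY i j
  exact h1


lemma nnnorm_pow_map_le {X Y : Matrix n n ℝ} (hX : ∀ i j, 0 ≤ X i j)
    (hXY : ∀ i j, X i j ≤ Y i j) (k : ℕ) : ‖(X.map 𝕔) ^ k‖₊ ≤ ‖(Y.map 𝕔) ^ k‖₊ := by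
  rw [← map_pow_c, ← map_pow_c, nnnorm_map_c, nnnorm_map_c]
  exact nnnorm_le_of_entry_le (pow_entry_nonneg hX k) (pow_entry_le hX hXY k)

lemma specRad_mono [Nonempty n] {X Y : Matrix n n ℝ} (hX : ∀ i j, 0 ≤ X i j)
    (hXY : ∀ i j, X i j ≤ Y i j) : specRad X ≤ specRad Y := by
  refine Real.sSup_le ?_ (specRad_nonneg Y)
  rintro x ⟨μ, hμ, rfl⟩
  -- ‖μ‖₊ ≤ spectralRadius ℂ (Y.map 𝕔)
  have key : (‖μ‖₊ : ℝ≥0∞) ≤ spectralRadius ℂ (Y.map 𝕔) := by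
    refine ge_of_tendsto (spectrum.pow_nnnorm_pow_one_div_tendsto_nhds_spectralRadius
      (Y.map 𝕔)) ?_
    filter_upwards [Filter.eventually_ge_atTop 1] with k hk
    have h1 : μ ^ k ∈ spectrum ℂ ((X.map 𝕔) ^ k) := by
      have := spectrum.subset_polynomial_aeval (X.map 𝕔) (Polynomial.X ^ k : Polynomial ℂ)
      simpa using this ⟨μ, hμ, by simp⟩
    have h2 : ‖μ ^ k‖ ≤ ‖(X.map 𝕔) ^ k‖ := spectrum.norm_le_norm_of_mem h1
    have h2' : ‖(X.map 𝕔) ^ k‖₊ ≤ ‖(Y.map 𝕔) ^ k‖₊ := nnnorm_pow_map_le hX hXY k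
    have h3 : ‖μ‖₊ ^ k ≤ ‖(Y.map 𝕔) ^ k‖₊ := by
      rw [← nnnorm_pow]
      exact le_trans (by exact_mod_cast h2) h2'
    have h4 : (‖μ‖₊ : ℝ≥0∞) ^ (k : ℝ) ≤ (‖(Y.map 𝕔) ^ k‖₊ : ℝ≥0∞) := by
      rw [ENNReal.rpow_natCast, ← ENNReal.coe_pow]
      exact_mod_cast h3
    calc (‖μ‖₊ : ℝ≥0∞) = ((‖μ‖₊ : ℝ≥0∞) ^ (k : ℝ)) ^ (1 / (k : ℝ)) := by
          rw [← ENNReal.rpow_mul, mul_one_div, div_self (by positivity : (k:ℝ) ≠ 0),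
            ENNReal.rpow_one]
      _ ≤ (‖(Y.map 𝕔) ^ k‖₊ : ℝ≥0∞) ^ (1 / (k : ℝ)) :=
          ENNReal.rpow_le_rpow h4 (by positivity)
  have key2 : (‖μ‖₊ : ℝ≥0∞) ≤ ENNReal.ofReal (specRad Y) :=
    le_trans key (spectralRadius_le_ofReal Y)
  rw [← enorm_eq_nnnorm, ← ofReal_norm] at key2
  exact (ENNReal.ofReal_le_ofReal_iff (specRad_nonneg Y)).mp key2

lemma specRad_ev_norm_pow_le [Nonempty n] (X : Matrix n n ℝ) {t : ℝ}
    (ht : specRad X < t) : ∃ K : ℕ, ∀ k ≥ K, ‖X ^ k‖ ≤ t ^ k := by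
  have ht0 : 0 < t := lt_of_le_of_lt (specRad_nonneg X) ht
  have h1 : spectralRadius ℂ (X.map 𝕔) < ENNReal.ofReal t :=
    lt_of_le_of_lt (spectralRadius_le_ofReal X)
      ((ENNReal.ofReal_lt_ofReal_iff ht0).mpr ht)
  have h2 := (spectrum.pow_nnnorm_pow_one_div_tendsto_nhds_spectralRadius
      (X.map 𝕔)).eventually_lt_const h1
  rw [Filter.eventually_atTop] at h2
  obtain ⟨K, hK⟩ := h2
  refine ⟨max K 1, fun k hk => ?_⟩
  have hk1 : 1 ≤ k := le_trans (le_max_right K 1) hk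
  have hkr : (k : ℝ) ≠ 0 := by positivity
  have h3 := (hK k (le_trans (le_max_left K 1) hk)).le
  have h4 : (‖(X.map 𝕔) ^ k‖₊ : ℝ≥0∞) ≤ (ENNReal.ofReal t) ^ (k : ℝ) := by
    calc (‖(X.map 𝕔) ^ k‖₊ : ℝ≥0∞)
        = ((‖(X.map 𝕔) ^ k‖₊ : ℝ≥0∞) ^ (1 / (k:ℝ))) ^ (k : ℝ) := by
          rw [← ENNReal.rpow_mul, one_div_mul_cancel hkr, ENNReal.rpow_one]
      _ ≤ (ENNReal.ofReal t) ^ (k : ℝ) := ENNReal.rpow_le_rpow h3 (by positivity)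
  rw [ENNReal.rpow_natCast, ← ENNReal.ofReal_pow ht0.le] at h4
  have h5 : ‖(X.map 𝕔) ^ k‖ ≤ t ^ k := by
    rw [← enorm_eq_nnnorm, ← ofReal_norm] at h4
    exact (ENNReal.ofReal_le_ofReal_iff (by positivity)).mp h4
  rw [← map_pow_c] at h5
  calc ‖X ^ k‖ = ‖(X ^ k).map 𝕔‖ := by
        rw [← coe_nnnorm, ← coe_nnnorm, nnnorm_map_c]
    _ ≤ t ^ k := h5

attribute [local instance] Matrix.linftyOpNormedSpace

lemma norm_le_sum_entries (Y : Matrix n n ℝ) (hY : ∀ i j, 0 ≤ Y i j) :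
    ‖Y‖ ≤ ∑ i, ∑ j, Y i j := by
  rw [Matrix.linfty_opNorm_def]
  have h1 : ((Finset.univ : Finset n).sup fun i => ∑ j, ‖Y i j‖₊ : ℝ≥0)
      ≤ ∑ i, ∑ j, ‖Y i j‖₊ := by
    refine Finset.sup_le fun i _ => ?_
    exact Finset.single_le_sum (f := fun i => ∑ j, ‖Y i j‖₊)
      (fun _ _ => zero_le) (Finset.mem_univ i)
  calc ((Finset.univ : Finset n).sup fun i => ∑ j, ‖Y i j‖₊ : ℝ≥0).toReal
      ≤ ((∑ i, ∑ j, ‖Y i j‖₊ : ℝ≥0) : ℝ) := by exact_mod_cast h1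
    _ = ∑ i, ∑ j, Y i j := by
        push_cast
        refine Finset.sum_congr rfl fun i _ => Finset.sum_congr rfl fun j _ => ?_
        simp [coe_nnnorm, abs_of_nonneg (hY i j)]

lemma smul_geom_inverse {𝕜 : Type*} [NormedField 𝕜] [CompleteSpace 𝕜] (Y : Matrix n n 𝕜) (z : 𝕜)
    (hz : z ≠ 0) (hsum : Summable fun k : ℕ => ‖Y ^ k‖ * ‖z⁻¹‖ ^ k) :
    IsUnit (z • (1 : Matrix n n 𝕜) - Y) ∧
      Ring.inverse (z • (1 : Matrix n n 𝕜) - Y) = ∑' k : ℕ, z⁻¹ ^ (k + 1) • Y ^ k := by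
  set f : ℕ → Matrix n n 𝕜 := fun k => z⁻¹ ^ k • Y ^ k with hf_def
  set g : ℕ → Matrix n n 𝕜 := fun k => z⁻¹ ^ (k + 1) • Y ^ k with hg_def
  have hnormf : ∀ k, ‖f k‖ = ‖Y ^ k‖ * ‖z⁻¹‖ ^ k := fun k => by
    rw [hf_def, norm_smul, norm_pow, mul_comm]
  have : @CompleteSpace (Matrix n n 𝕜) PseudoMetricSpace.toUniformSpace :=
    (inferInstance : CompleteSpace (n → n → 𝕜))
  have hf : Summable f := by
    refine Summable.of_norm ?_
    simpa only [hnormf] using hsum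
  have hg : Summable g := by
    refine Summable.of_norm ?_
    have : ∀ k, ‖g k‖ = ‖z⁻¹‖ * (‖Y ^ k‖ * ‖z⁻¹‖ ^ k) := fun k => by
      rw [hg_def, norm_smul, norm_pow, pow_succ]; ring
    simpa only [this] using hsum.mul_left _
  have hf0 : Filter.Tendsto f atTop (nhds 0) := by
    refine squeeze_zero_norm (fun k => (hnormf k).le) ?_
    exact hsum.tendsto_atTop_zero
  have hterm : ∀ k, (z • (1 : Matrix n n 𝕜) - Y) * g k = f k - f (k + 1) := by
    intro k
    have h1 : (z • (1 : Matrix n n 𝕜)) * g k = f k := by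
      rw [hg_def, hf_def, Matrix.smul_mul, Matrix.one_mul, smul_smul]
      congr 1
      rw [pow_succ, ← mul_assoc, mul_comm z, mul_assoc, mul_inv_cancel₀ hz, mul_one]
    have h2 : Y * g k = f (k + 1) := by
      rw [hg_def, hf_def, Matrix.mul_smul]
      congr 1
      rw [pow_succ']
    rw [sub_mul, h1, h2]
  have htele : HasSum (fun k => f k - f (k + 1)) 1 := by
    refine ((hf.sub ((summable_nat_add_iff 1).mpr hf)).hasSum_iff_tendsto_nat).mpr ?_
    have heq : ∀ m : ℕ, ∑ k ∈ Finset.range m, (f k - f (k + 1)) = f 0 - f m :=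
      fun m => Finset.sum_range_sub' f m
    simp only [heq]
    have : f 0 = 1 := by simp [hf_def]
    rw [← sub_zero (1 : Matrix n n 𝕜)] at this ⊢
    simpa [this] using Filter.Tendsto.sub
      (tendsto_const_nhds : Filter.Tendsto (fun _ : ℕ => f 0) atTop (nhds (f 0))) hf0
  have hmapped : HasSum (fun k => (z • (1 : Matrix n n 𝕜) - Y) * g k)
      ((z • (1 : Matrix n n 𝕜) - Y) * ∑' k, g k) :=
    hg.hasSum.map (AddMonoidHom.mulLeft (z • (1 : Matrix n n 𝕜) - Y)) (continuous_mul_left _)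
  simp only [hterm] at hmapped
  have hid : (z • (1 : Matrix n n 𝕜) - Y) * ∑' k, g k = 1 := hmapped.unique htele
  have hU : IsUnit (z • (1 : Matrix n n 𝕜) - Y) := by
    have hdet : (z • (1 : Matrix n n 𝕜) - Y).det * (∑' k, g k).det = 1 := by
      rw [← Matrix.det_mul, hid, Matrix.det_one]
    exact (Matrix.isUnit_iff_isUnit_det _).mpr (IsUnit.of_mul_eq_one _ hdet)
  refine ⟨hU, ?_⟩
  calc Ring.inverse (z • (1 : Matrix n n 𝕜) - Y)
      = Ring.inverse (z • (1 : Matrix n n 𝕜) - Y)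
        * ((z • (1 : Matrix n n 𝕜) - Y) * ∑' k, g k) := by rw [hid, mul_one]
    _ = (Ring.inverse (z • (1 : Matrix n n 𝕜) - Y) * (z • (1 : Matrix n n 𝕜) - Y))
        * ∑' k, g k := by rw [mul_assoc]
    _ = ∑' k, g k := by rw [Ring.inverse_mul_cancel _ hU, one_mul]

lemma hasSum_entry {f : ℕ → Matrix n n ℝ} {L : Matrix n n ℝ} (h : HasSum f L) (i j : n) :
    HasSum (fun k => f k i j) (L i j) := by
  let e : Matrix n n ℝ →+ ℝ := AddMonoidHom.mk' (fun Y => Y i j) (fun a b => rfl)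
  have hb : Continuous e := AddMonoidHomClass.continuous_of_bound e 1 (fun Y => by
    rw [one_mul]
    have := entry_le_nnnorm Y i j
    exact_mod_cast this)
  exact h.map e hb

lemma specRad_mem_spectrum [Nonempty n] (X : Matrix n n ℝ) (hX : ∀ i j, 0 ≤ X i j) :
    ((specRad X : ℝ) : ℂ) ∈ spectrum ℂ (X.map 𝕔) := by
  obtain ⟨μ₀, hμ₀, hn₀⟩ := exists_norm_eq_specRad X
  set r := specRad X with hr_def
  rcases eq_or_lt_of_le (specRad_nonneg X) with hr0 | hrpos
  · have hrr : r = 0 := by rw [hr_def, ← hr0]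
    have hμz : μ₀ = 0 := norm_eq_zero.mp (by rw [hn₀, hrr])
    have : ((r : ℝ) : ℂ) = μ₀ := by rw [hrr, hμz]; simp
    rw [this]; exact hμ₀
  by_contra hmem
  have hdetc : ((r : ℂ) • (1 : Matrix n n ℂ) - X.map 𝕔).det ≠ 0 :=
    fun h => hmem ((mem_spectrum_iff_det _ _).mpr h)
  have hmap : (r • (1 : Matrix n n ℝ) - X).map 𝕔 = (r : ℂ) • (1 : Matrix n n ℂ) - X.map 𝕔 := by
    ext i j
    by_cases h : i = j <;>
      simp [Matrix.map_apply, Matrix.one_apply, h]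
  have hdetr : IsUnit (r • (1 : Matrix n n ℝ) - X) := by
    rw [Matrix.isUnit_iff_isUnit_det, isUnit_iff_ne_zero]
    intro h
    apply hdetc
    have hd := (algebraMap ℝ ℂ).map_det (r • (1 : Matrix n n ℝ) - X)
    rw [RingHom.mapMatrix_apply] at hd
    rw [← hmap, ← hd, h, map_zero]
  obtain ⟨u, hu⟩ := hdetr
  have hcont : ContinuousAt (fun t : ℝ => Ring.inverse (t • (1 : Matrix n n ℝ) - X)) r := by
    have h1 : Continuous (fun t : ℝ => t • (1 : Matrix n n ℝ) - X) :=
      (continuous_id.smul continuous_const).sub continuous_const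
    have h2 : ContinuousAt Ring.inverse (r • (1 : Matrix n n ℝ) - X) := by
      rw [← hu]; exact NormedRing.inverse_continuousAt u
    exact Filter.Tendsto.comp h2 (h1.continuousAt (x := r))
  set C : ℝ := ‖Ring.inverse (r • (1 : Matrix n n ℝ) - X)‖ + 1 with hC_def
  have hev : ∀ᶠ t in nhds r, ‖Ring.inverse (t • (1 : Matrix n n ℝ) - X)‖ ≤ C := by
    have h3 := (hcont.norm.tendsto).eventually_lt_const (lt_add_one _)
    exact h3.mono fun t ht => ht.le
  have hpart : ∀ (i j : n) (m : ℕ),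
      ∑ k ∈ Finset.range m, r⁻¹ ^ (k + 1) * (X ^ k) i j ≤ C := by
    intro i j m
    have hTend : Filter.Tendsto
        (fun t : ℝ => ∑ k ∈ Finset.range m, t⁻¹ ^ (k + 1) * (X ^ k) i j)
        (nhdsWithin r (Set.Ioi r))
        (nhds (∑ k ∈ Finset.range m, r⁻¹ ^ (k + 1) * (X ^ k) i j)) := by
      refine Filter.Tendsto.mono_left ?_ nhdsWithin_le_nhds
      refine tendsto_finset_sum _ fun k _ => ?_
      exact ((continuousAt_inv₀ (ne_of_gt hrpos)).pow (k + 1)).mul continuousAt_const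
    refine le_of_tendsto hTend ?_
    obtain ⟨δ, hδpos, hδ⟩ := Metric.eventually_nhds_iff.mp hev
    have hIoo : Set.Ioo r (r + δ) ∈ nhdsWithin r (Set.Ioi r) :=
      Ioo_mem_nhdsGT_of_mem ⟨le_refl r, by linarith⟩
    filter_upwards [hIoo] with t ht
    have hrt : r < t := ht.1
    have htpos : 0 < t := lt_trans hrpos hrt
    have hsumN : Summable (fun k : ℕ => ‖X ^ k‖ * ‖t⁻¹‖ ^ k) := by
      set t' := (r + t) / 2 with ht'_def
      have h1 : r < t' := by rw [ht'_def]; linarith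
      have h2 : t' < t := by rw [ht'_def]; linarith
      have h3 : 0 < t' := lt_trans hrpos h1
      obtain ⟨K, hK⟩ := specRad_ev_norm_pow_le X h1
      refine Summable.of_norm_bounded_eventually_nat (g := fun k => (t' / t) ^ k) ?_ ?_
      · exact summable_geometric_of_lt_one (by positivity)
          (by rw [div_lt_one htpos]; exact h2)
      · rw [Filter.eventually_atTop]
        refine ⟨K, fun k hk => ?_⟩
        have hXk : (0:ℝ) ≤ ‖X ^ k‖ := norm_nonneg _
        have htinv : ‖t⁻¹‖ = t⁻¹ := by
          rw [Real.norm_eq_abs, abs_of_nonneg (by positivity)]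
        rw [Real.norm_eq_abs, abs_of_nonneg (mul_nonneg hXk (by positivity)), htinv]
        calc ‖X ^ k‖ * t⁻¹ ^ k ≤ t' ^ k * t⁻¹ ^ k :=
              mul_le_mul_of_nonneg_right (hK k hk) (by positivity)
          _ = (t' / t) ^ k := by rw [← mul_pow, ← div_eq_mul_inv]
    obtain ⟨hU_t, hinv_t⟩ := smul_geom_inverse X t (ne_of_gt htpos) hsumN
    have hsum_g : Summable (fun k : ℕ => t⁻¹ ^ (k + 1) • X ^ k) := by
      refine Summable.of_norm ?_
      have heq : ∀ k : ℕ, ‖t⁻¹ ^ (k + 1) • X ^ k‖ = ‖t⁻¹‖ * (‖X ^ k‖ * ‖t⁻¹‖ ^ k) := fun k => by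
        rw [norm_smul, norm_pow, pow_succ]; ring
      simpa only [heq] using hsumN.mul_left _
    have hentry : HasSum (fun k => t⁻¹ ^ (k + 1) * (X ^ k) i j)
        ((Ring.inverse (t • (1 : Matrix n n ℝ) - X)) i j) := by
      rw [hinv_t]
      have := hasSum_entry hsum_g.hasSum i j
      simpa only [Matrix.smul_apply, smul_eq_mul] using this
    have hnonneg : ∀ k, 0 ≤ t⁻¹ ^ (k + 1) * (X ^ k) i j :=
      fun k => mul_nonneg (by positivity) (pow_entry_nonneg hX k i j)
    have hbd : dist t r < δ := by
      rw [Real.dist_eq, abs_of_nonneg (by linarith [ht.1.le] : (0:ℝ) ≤ t - r)]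
      linarith [ht.2]
    calc ∑ k ∈ Finset.range m, t⁻¹ ^ (k + 1) * (X ^ k) i j
        ≤ ∑' k, t⁻¹ ^ (k + 1) * (X ^ k) i j :=
          hentry.summable.sum_le_tsum (Finset.range m) (fun k _ => hnonneg k)
      _ = (Ring.inverse (t • (1 : Matrix n n ℝ) - X)) i j := hentry.tsum_eq
      _ ≤ ‖Ring.inverse (t • (1 : Matrix n n ℝ) - X)‖ := by
          have h5 := entry_le_nnnorm (Ring.inverse (t • (1 : Matrix n n ℝ) - X)) i j
          have h6 : |(Ring.inverse (t • (1 : Matrix n n ℝ) - X)) i j|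
              ≤ ‖Ring.inverse (t • (1 : Matrix n n ℝ) - X)‖ := by exact_mod_cast h5
          exact le_trans (le_abs_self _) h6
      _ ≤ C := hδ hbd
  have hsum_r_ij : ∀ i j : n, Summable (fun k : ℕ => r⁻¹ ^ (k + 1) * (X ^ k) i j) := by
    intro i j
    exact summable_of_sum_range_le
      (fun k => mul_nonneg (by positivity) (pow_entry_nonneg hX k i j)) (hpart i j)
  have hμ0ne : μ₀ ≠ 0 := by
    intro h
    rw [h, norm_zero] at hn₀
    exact (ne_of_gt hrpos) hn₀.symm
  have hrinv : ‖μ₀⁻¹‖ = r⁻¹ := by rw [norm_inv, hn₀]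
  have hsumNr : Summable (fun k : ℕ => ‖X ^ k‖ * ‖μ₀⁻¹‖ ^ k) := by
    have h1 : ∀ k : ℕ, ‖X ^ k‖ * ‖μ₀⁻¹‖ ^ k
        ≤ r * ∑ i, ∑ j, r⁻¹ ^ (k + 1) * (X ^ k) i j := by
      intro k
      rw [hrinv]
      have h2 : ‖X ^ k‖ ≤ ∑ i, ∑ j, (X ^ k) i j :=
        norm_le_sum_entries _ (pow_entry_nonneg hX k)
      have h3 : r * ∑ i, ∑ j, r⁻¹ ^ (k + 1) * (X ^ k) i j
          = (∑ i, ∑ j, (X ^ k) i j) * r⁻¹ ^ k := by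
        have h4 : ∀ i : n, ∑ j, r⁻¹ ^ (k + 1) * (X ^ k) i j
            = r⁻¹ ^ (k + 1) * ∑ j, (X ^ k) i j := fun i => by rw [Finset.mul_sum]
        simp only [h4]
        rw [← Finset.mul_sum, ← mul_assoc]
        rw [pow_succ, ← mul_assoc]
        rw [mul_comm r, mul_assoc _ r, mul_inv_cancel₀ (ne_of_gt hrpos), mul_one, mul_comm]
      rw [h3]
      exact mul_le_mul_of_nonneg_right h2 (by positivity)
    refine Summable.of_nonneg_of_le (fun k => by positivity) h1 ?_
    refine Summable.mul_left r ?_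
    exact summable_sum fun i _ => summable_sum fun j _ => hsum_r_ij i j
  have hsumC : Summable (fun k : ℕ => ‖(X.map 𝕔) ^ k‖ * ‖μ₀⁻¹‖ ^ k) := by
    have heq : ∀ k : ℕ, ‖(X.map 𝕔) ^ k‖ = ‖X ^ k‖ := fun k => by
      rw [← map_pow_c, ← coe_nnnorm, ← coe_nnnorm, nnnorm_map_c]
    simpa only [heq] using hsumNr
  obtain ⟨hUc, _⟩ := smul_geom_inverse (X.map 𝕔) μ₀ hμ0ne hsumC
  exact (spectrum.mem_iff.mp hμ₀) (by rw [Algebra.algebraMap_eq_smul_one]; exact hUc)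

lemma spectrum_le_rowsum {X : Matrix n n ℝ} (hX : ∀ i j, 0 ≤ X i j) {c : ℝ} (hc0 : 0 ≤ c)
    (hc : ∀ i, ∑ j, X i j ≤ c) {z : ℂ} (hz : z ∈ spectrum ℂ (X.map 𝕔)) : ‖z‖ ≤ c := by
  rw [mem_spectrum_iff_det] at hz
  obtain ⟨v, hv0, hv⟩ := (Matrix.exists_mulVec_eq_zero_iff).mpr hz
  have hvec : ∀ i, z * v i = ∑ j, (X i j : ℂ) * v j := by
    intro i
    have h1 : (z • (1 : Matrix n n ℂ)) *ᵥ v - (X.map 𝕔) *ᵥ v = 0 := by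
      rw [← Matrix.sub_mulVec, hv]
    have h2 : (z • (1 : Matrix n n ℂ)) *ᵥ v = z • v := by
      rw [Matrix.smul_mulVec, Matrix.one_mulVec]
    have h3 := congrFun h1 i
    rw [h2] at h3
    simp only [Pi.sub_apply, Pi.smul_apply, smul_eq_mul, Pi.zero_apply, sub_eq_zero] at h3
    rw [h3]
    simp [Matrix.mulVec, dotProduct, Matrix.map_apply]
  have hex : ∃ i, v i ≠ 0 := by
    by_contra h; push_neg at h; exact hv0 (funext h)
  obtain ⟨i₁, hi₁⟩ := hex
  obtain ⟨i₀, _, hmax⟩ := Finset.exists_max_image Finset.univ (fun i => ‖v i‖) ⟨i₁, Finset.mem_univ i₁⟩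
  have hvi₀ : 0 < ‖v i₀‖ :=
    lt_of_lt_of_le (norm_pos_iff.mpr hi₁) (hmax i₁ (Finset.mem_univ i₁))
  have key : ‖z‖ * ‖v i₀‖ ≤ c * ‖v i₀‖ := by
    calc ‖z‖ * ‖v i₀‖ = ‖z * v i₀‖ := (norm_mul _ _).symm
      _ = ‖∑ j, (X i₀ j : ℂ) * v j‖ := by rw [hvec i₀]
      _ ≤ ∑ j, ‖(X i₀ j : ℂ) * v j‖ := norm_sum_le _ _
      _ = ∑ j, X i₀ j * ‖v j‖ := by
          refine Finset.sum_congr rfl fun j _ => ?_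
          rw [norm_mul, Complex.norm_real, Real.norm_eq_abs, abs_of_nonneg (hX i₀ j)]
      _ ≤ ∑ j, X i₀ j * ‖v i₀‖ := by
          refine Finset.sum_le_sum fun j _ => ?_
          exact mul_le_mul_of_nonneg_left (hmax j (Finset.mem_univ j)) (hX i₀ j)
      _ = (∑ j, X i₀ j) * ‖v i₀‖ := by rw [Finset.sum_mul]
      _ ≤ c * ‖v i₀‖ := mul_le_mul_of_nonneg_right (hc i₀) (norm_nonneg _)
  exact le_of_mul_le_mul_right key hvi₀

lemma specRad_le_rowsum {X : Matrix n n ℝ} (hX : ∀ i j, 0 ≤ X i j) {c : ℝ} (hc0 : 0 ≤ c)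
    (hc : ∀ i, ∑ j, X i j ≤ c) : specRad X ≤ c := by
  refine Real.sSup_le ?_ hc0
  rintro x ⟨μ, hμ, rfl⟩
  exact spectrum_le_rowsum hX hc0 hc hμ

lemma unit_one_sub (D : Matrix n n ℝ) (hD : ∀ i j, 0 ≤ D i j) {γ : ℝ} (hγ1 : γ < 1)
    (hrow : ∀ i, ∑ j, D i j ≤ γ) : IsUnit ((1 : Matrix n n ℝ) - D).det := by
  rw [isUnit_iff_ne_zero]
  intro h
  obtain ⟨v, hv0, hv⟩ := Matrix.exists_mulVec_eq_zero_iff.mpr h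
  have hvec : ∀ i, v i = ∑ j, D i j * v j := by
    intro i
    have h1 : (1 : Matrix n n ℝ) *ᵥ v - D *ᵥ v = 0 := by rw [← Matrix.sub_mulVec, hv]
    have h3 := congrFun h1 i
    rw [Matrix.one_mulVec] at h3
    simp only [Pi.sub_apply, Pi.zero_apply, sub_eq_zero] at h3
    rw [h3]; rfl
  have hex : ∃ i, v i ≠ 0 := by
    by_contra h'; push_neg at h'; exact hv0 (funext h')
  obtain ⟨i₁, hi₁⟩ := hex
  obtain ⟨i₀, _, hmax⟩ := Finset.exists_max_image Finset.univ (fun i => |v i|)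
    ⟨i₁, Finset.mem_univ i₁⟩
  have hvi₀ : 0 < |v i₀| :=
    lt_of_lt_of_le (abs_pos.mpr hi₁) (hmax i₁ (Finset.mem_univ i₁))
  have key : |v i₀| ≤ γ * |v i₀| := by
    calc |v i₀| = |∑ j, D i₀ j * v j| := by rw [← hvec i₀]
      _ ≤ ∑ j, |D i₀ j * v j| := Finset.abs_sum_le_sum_abs _ _
      _ = ∑ j, D i₀ j * |v j| := by
          refine Finset.sum_congr rfl fun j _ => ?_
          rw [abs_mul, abs_of_nonneg (hD i₀ j)]
      _ ≤ ∑ j, D i₀ j * |v i₀| := by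
          refine Finset.sum_le_sum fun j _ => ?_
          exact mul_le_mul_of_nonneg_left (hmax j (Finset.mem_univ j)) (hD i₀ j)
      _ = (∑ j, D i₀ j) * |v i₀| := by rw [Finset.sum_mul]
      _ ≤ γ * |v i₀| := mul_le_mul_of_nonneg_right (hrow i₀) (abs_nonneg _)
  nlinarith

lemma solution_nonneg (D : Matrix n n ℝ) (hD : ∀ i j, 0 ≤ D i j) {γ : ℝ} (hγ1 : γ < 1)
    (hrow : ∀ i, ∑ j, D i j ≤ γ) {b x : n → ℝ} (hb : ∀ i, 0 ≤ b i)
    (hx : ((1 : Matrix n n ℝ) - D) *ᵥ x = b) : ∀ i, 0 ≤ x i := by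
  have hvec : ∀ i, x i = b i + ∑ j, D i j * x j := by
    intro i
    have h3 := congrFun hx i
    rw [Matrix.sub_mulVec, Matrix.one_mulVec] at h3
    have h4 : x i - ∑ j, D i j * x j = b i := by
      simpa [Matrix.mulVec, dotProduct] using h3
    linarith [h4]
  by_contra h
  push_neg at h
  obtain ⟨i₁, hi₁⟩ := h
  obtain ⟨i₀, _, hmax⟩ := Finset.exists_max_image Finset.univ (fun i => -x i)
    ⟨i₁, Finset.mem_univ i₁⟩
  set m := -x i₀ with hm_def
  have hm_pos : 0 < m := lt_of_lt_of_le (by linarith) (hmax i₁ (Finset.mem_univ i₁))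
  have key : m ≤ γ * m := by
    have h5 : ∑ j, D i₀ j * x j ≥ ∑ j, D i₀ j * (-m) := by
      refine Finset.sum_le_sum fun j _ => ?_
      refine mul_le_mul_of_nonneg_left ?_ (hD i₀ j)
      have := hmax j (Finset.mem_univ j)
      linarith
    have h6 : ∑ j, D i₀ j * (-m) = -m * ∑ j, D i₀ j := by
      rw [Finset.mul_sum]; exact Finset.sum_congr rfl fun j _ => by ring
    have h7 : -m * ∑ j, D i₀ j ≥ -m * γ := by
      have := hrow i₀
      nlinarith
    have h8 := hvec i₀
    have h9 := hb i₀
    nlinarith [h5, h6.symm ▸ h5, h8]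
  nlinarith

lemma inv_entries_nonneg (D : Matrix n n ℝ) (hD : ∀ i j, 0 ≤ D i j) {γ : ℝ} (hγ1 : γ < 1)
    (hrow : ∀ i, ∑ j, D i j ≤ γ) : ∀ i j, 0 ≤ ((1 : Matrix n n ℝ) - D)⁻¹ i j := by
  intro i j
  have hu := unit_one_sub D hD hγ1 hrow
  have hid : ((1 : Matrix n n ℝ) - D) * ((1 : Matrix n n ℝ) - D)⁻¹ = 1 :=
    Matrix.mul_nonsing_inv _ hu
  have hx : ((1 : Matrix n n ℝ) - D) *ᵥ (((1 : Matrix n n ℝ) - D)⁻¹ *ᵥ Pi.single j 1)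
      = Pi.single j 1 := by
    rw [Matrix.mulVec_mulVec, hid, Matrix.one_mulVec]
  have := solution_nonneg D hD hγ1 hrow (b := Pi.single j 1)
    (fun i' => by by_cases h : i' = j <;> simp [h, Pi.single_apply]) hx i
  simpa [Matrix.mulVec_single] using this

lemma inv_ones_ge_one (D : Matrix n n ℝ) (hD : ∀ i j, 0 ≤ D i j) {γ : ℝ} (hγ1 : γ < 1)
    (hrow : ∀ i, ∑ j, D i j ≤ γ) :
    ∀ i, 1 ≤ (((1 : Matrix n n ℝ) - D)⁻¹ *ᵥ fun _ => (1 : ℝ)) i := by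
  intro i
  have hu := unit_one_sub D hD hγ1 hrow
  have hid : ((1 : Matrix n n ℝ) - D) * ((1 : Matrix n n ℝ) - D)⁻¹ = 1 :=
    Matrix.mul_nonsing_inv _ hu
  set x : n → ℝ := ((1 : Matrix n n ℝ) - D)⁻¹ *ᵥ fun _ => (1 : ℝ) with hx_def
  have hx : ((1 : Matrix n n ℝ) - D) *ᵥ x = fun _ => (1 : ℝ) := by
    rw [hx_def, Matrix.mulVec_mulVec, hid, Matrix.one_mulVec]
  have hxnn : ∀ i', 0 ≤ x i' := solution_nonneg D hD hγ1 hrow (fun _ => zero_le_one) hx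
  have h3 := congrFun hx i
  rw [Matrix.sub_mulVec, Matrix.one_mulVec] at h3
  have h4 : x i - ∑ j, D i j * x j = 1 := by
    simpa [Matrix.mulVec, dotProduct] using h3
  have h5 : 0 ≤ ∑ j, D i j * x j :=
    Finset.sum_nonneg fun j _ => mul_nonneg (hD i j) (hxnn j)
  linarith

lemma specRad_of_isEmpty [IsEmpty n] (X : Matrix n n ℝ) : specRad X = 0 := by
  have hset : {x : ℝ | ∃ μ : ℂ, μ ∈ spectrum ℂ (X.map 𝕔) ∧ x = ‖μ‖} = ∅ := by
    ext x
    simp only [Set.mem_setOf_eq, Set.mem_empty_iff_false, iff_false, not_exists]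
    intro μ ⟨hμ, _⟩
    exact spectrum.mem_iff.mp hμ (isUnit_of_subsingleton _)
  rw [specRad, hset, Real.sSup_empty]

lemma det_shift_iff {Ac Mc Nc Bc Cc : Matrix n n ℂ} (hM : Mc = Ac + Nc)
    (hB : Ac * Bc = Nc) (hC : Mc * Cc = Nc) (hdA : Ac.det ≠ 0) (hdM : Mc.det ≠ 0)
    {z lam : ℂ} (hz : z ≠ 1) (hlam : lam * (1 - z) = z) :
    ((z • (1 : Matrix n n ℂ) - Cc).det = 0 ↔ (lam • (1 : Matrix n n ℂ) - Bc).det = 0) := by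
  have key : Mc * (z • (1 : Matrix n n ℂ) - Cc)
      = (1 - z) • (Ac * (lam • (1 : Matrix n n ℂ) - Bc)) := by
    rw [Matrix.mul_sub, Matrix.mul_sub, hC, hB]
    rw [Matrix.mul_smul, Matrix.mul_smul, Matrix.mul_one, Matrix.mul_one]
    rw [hM, smul_sub, smul_smul]
    rw [smul_add, sub_smul, one_smul]
    have hlam' : (1 - z) * lam = z := by rw [mul_comm]; exact hlam
    rw [hlam']
    abel
  have hdet := congrArg Matrix.det key
  rw [Matrix.det_mul, Matrix.det_smul, Matrix.det_mul] at hdet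
  have hzn : (1 - z) ^ Fintype.card n ≠ 0 :=
    pow_ne_zero _ (sub_ne_zero.mpr (Ne.symm hz))
  constructor
  · intro h
    rw [h, mul_zero] at hdet
    rcases mul_eq_zero.mp hdet.symm with h1 | h1
    · exact absurd h1 hzn
    rcases mul_eq_zero.mp h1 with h2 | h2
    · exact absurd h2 hdA
    · exact h2
  · intro h
    rw [h, mul_zero, mul_zero] at hdet
    rcases mul_eq_zero.mp hdet with h1 | h1
    · exact absurd h1 hdM
    · exact h1
end helpers
set_option maxHeartbeats 2000000 in
theorem stmt8
    {S A W : Type*} [Fintype S] [DecidableEq S] [Fintype A] [Fintype W]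
    (μ : S → W → ℝ) (π : W → S → A → ℝ) (P : S → A → S → ℝ)
    (β βt : W → S → ℝ)
    (hμpos : ∀ s w, 0 ≤ μ s w) (hμsum : ∀ s, ∑ w, μ s w = 1)
    (hπpos : ∀ w s a, 0 ≤ π w s a) (hπsum : ∀ w s, ∑ a, π w s a = 1)
    (hPpos : ∀ s a s', 0 ≤ P s a s') (hPsum : ∀ s a, ∑ s', P s a s' = 1)
    (hβ0 : ∀ w s, 0 ≤ β w s) (hβ1 : ∀ w s, β w s ≤ 1)
    (hβt0 : ∀ w s, 0 ≤ βt w s) (hβt1 : ∀ w s, βt w s ≤ 1)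
    (hβle : ∀ w s, βt w s ≤ β w s)
    (γ : ℝ) (hγ0 : 0 ≤ γ) (hγ1 : γ < 1)
    -- termination matrices N, Ñ and preconditioners M, M̃ induced by the two
    -- option sets (same policies, different termination functions)
    (N Nt M Mt : Matrix S S ℝ)
    (hN : ∀ s s', N s s' =
      γ * ∑ w, μ s w * ∑ a, π w s a * P s a s' * β w s')
    (hNt : ∀ s s', Nt s s' =
      γ * ∑ w, μ s w * ∑ a, π w s a * P s a s' * βt w s')
    (hM : ∀ s s', M s s' = (1 : Matrix S S ℝ) s s' -
      γ * ∑ w, μ s w * ∑ a, π w s a * P s a s' * (1 - β w s'))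
    (hMt : ∀ s s', Mt s s' = (1 : Matrix S S ℝ) s s' -
      γ * ∑ w, μ s w * ∑ a, π w s a * P s a s' * (1 - βt w s')) :
    (∀ s s', Nt s s' ≤ N s s') ∧
    specRad (Mt⁻¹ * Nt) ≤ specRad (M⁻¹ * N) ∧ specRad (M⁻¹ * N) < 1 := by
  -- generic sum manipulation facts
  have key_nonneg : ∀ (g : W → S → ℝ), (∀ w s', 0 ≤ g w s') →
      ∀ s s', 0 ≤ ∑ w, μ s w * ∑ a, π w s a * P s a s' * g w s' := by
    intro g hg0 s s'
    refine Finset.sum_nonneg fun w _ => mul_nonneg (hμpos s w) ?_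
    exact Finset.sum_nonneg fun a _ =>
      mul_nonneg (mul_nonneg (hπpos w s a) (hPpos s a s')) (hg0 w s')
  have key_sum : ∀ (g : W → S → ℝ) (s : S),
      ∑ s', ∑ w, μ s w * ∑ a, π w s a * P s a s' * g w s'
        = ∑ w, μ s w * ∑ a, π w s a * ∑ s', P s a s' * g w s' := by
    intro g s
    rw [Finset.sum_comm]
    refine Finset.sum_congr rfl fun w _ => ?_
    rw [← Finset.mul_sum]
    congr 1
    rw [Finset.sum_comm]
    refine Finset.sum_congr rfl fun a _ => ?_
    simp only [mul_assoc]
    rw [← Finset.mul_sum]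
  have key_le_one : ∀ (g : W → S → ℝ), (∀ w s', 0 ≤ g w s') → (∀ w s', g w s' ≤ 1) →
      ∀ s, ∑ s', ∑ w, μ s w * ∑ a, π w s a * P s a s' * g w s' ≤ 1 := by
    intro g hg0 hg1 s
    rw [key_sum g s]
    calc ∑ w, μ s w * ∑ a, π w s a * ∑ s', P s a s' * g w s'
        ≤ ∑ w, μ s w * ∑ a, π w s a * 1 := by
          refine Finset.sum_le_sum fun w _ => ?_
          refine mul_le_mul_of_nonneg_left ?_ (hμpos s w)
          refine Finset.sum_le_sum fun a _ => ?_
          refine mul_le_mul_of_nonneg_left ?_ (hπpos w s a)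
          calc ∑ s', P s a s' * g w s' ≤ ∑ s', P s a s' :=
                Finset.sum_le_sum fun s' _ =>
                  mul_le_of_le_one_right (hPpos s a s') (hg1 w s')
            _ = 1 := hPsum s a
      _ = ∑ w, μ s w := by
          refine Finset.sum_congr rfl fun w _ => ?_
          simp only [mul_one]
          rw [hπsum w s, mul_one]
      _ = 1 := hμsum s
  have key_mass : ∀ s : S, ∑ s', ∑ w, μ s w * ∑ a, π w s a * P s a s' = 1 := by
    intro s
    have h := key_sum (fun _ _ => 1) s
    simp only [mul_one] at h
    rw [h]
    calc ∑ w, μ s w * ∑ a, π w s a * ∑ s', P s a s'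
        = ∑ w, μ s w := by
          refine Finset.sum_congr rfl fun w _ => ?_
          have : ∀ a, π w s a * ∑ s', P s a s' = π w s a := fun a => by
            rw [hPsum s a, mul_one]
          simp only [this]
          rw [hπsum w s, mul_one]
      _ = 1 := hμsum s
  have key_add : ∀ (g : W → S → ℝ) (s : S),
      (∑ s', ∑ w, μ s w * ∑ a, π w s a * P s a s' * g w s')
        + (∑ s', ∑ w, μ s w * ∑ a, π w s a * P s a s' * (1 - g w s')) = 1 := by
    intro g s
    have heq : (∑ s', ∑ w, μ s w * ∑ a, π w s a * P s a s' * g w s')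
        + (∑ s', ∑ w, μ s w * ∑ a, π w s a * P s a s' * (1 - g w s'))
        = ∑ s', ∑ w, μ s w * ∑ a, π w s a * P s a s' := by
      rw [← Finset.sum_add_distrib]
      refine Finset.sum_congr rfl fun s' _ => ?_
      rw [← Finset.sum_add_distrib]
      refine Finset.sum_congr rfl fun w _ => ?_
      rw [← mul_add]
      congr 1
      rw [← Finset.sum_add_distrib]
      refine Finset.sum_congr rfl fun a _ => ?_
      ring
    rw [heq, key_mass s]
  -- part 1 : Nt ≤ N entrywise
  have hNtle : ∀ s s', Nt s s' ≤ N s s' := by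
    intro s s'
    rw [hN, hNt]
    refine mul_le_mul_of_nonneg_left ?_ hγ0
    refine Finset.sum_le_sum fun w _ => ?_
    refine mul_le_mul_of_nonneg_left ?_ (hμpos s w)
    refine Finset.sum_le_sum fun a _ => ?_
    exact mul_le_mul_of_nonneg_left (hβle w s')
      (mul_nonneg (hπpos w s a) (hPpos s a s'))
  refine ⟨hNtle, ?_⟩
  -- define the auxiliary matrices
  set D : Matrix S S ℝ :=
    Matrix.of fun s s' => γ * ∑ w, μ s w * ∑ a, π w s a * P s a s' * (1 - β w s') with hD_def
  set Dt : Matrix S S ℝ :=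
    Matrix.of fun s s' => γ * ∑ w, μ s w * ∑ a, π w s a * P s a s' * (1 - βt w s') with hDt_def
  set Q : Matrix S S ℝ :=
    Matrix.of fun s s' => γ * ∑ w, μ s w * ∑ a, π w s a * P s a s' with hQ_def
  have hMD : M = 1 - D := by
    ext s s'; rw [hM s s']; simp [hD_def, Matrix.sub_apply]
  have hMtD : Mt = 1 - Dt := by
    ext s s'; rw [hMt s s']; simp [hDt_def, Matrix.sub_apply]
  have hsub_inner : ∀ (g : W → S → ℝ) (s s' : S),
      (∑ w, μ s w * ∑ a, π w s a * P s a s') -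
        (∑ w, μ s w * ∑ a, π w s a * P s a s' * (1 - g w s'))
      = ∑ w, μ s w * ∑ a, π w s a * P s a s' * g w s' := by
    intro g s s'
    rw [← Finset.sum_sub_distrib]
    refine Finset.sum_congr rfl fun w _ => ?_
    rw [← mul_sub]
    congr 1
    rw [← Finset.sum_sub_distrib]
    refine Finset.sum_congr rfl fun a _ => ?_
    ring
  have hND : N = Q - D := by
    ext s s'
    rw [Matrix.sub_apply, hN s s']
    show γ * _ = γ * _ - γ * _
    rw [← mul_sub, hsub_inner β s s']
  have hNtD : Nt = Q - Dt := by
    ext s s'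
    rw [Matrix.sub_apply, hNt s s']
    show γ * _ = γ * _ - γ * _
    rw [← mul_sub, hsub_inner βt s s']
  -- nonnegativity and row sums
  have hNnn : ∀ s s', 0 ≤ N s s' := fun s s' => by
    rw [hN]
    exact mul_nonneg hγ0 (key_nonneg β hβ0 s s')
  have hNtnn : ∀ s s', 0 ≤ Nt s s' := fun s s' => by
    rw [hNt]
    exact mul_nonneg hγ0 (key_nonneg βt hβt0 s s')
  have hQnn : ∀ s s', 0 ≤ Q s s' := fun s s' => by
    have h := key_nonneg (fun _ _ => 1) (fun _ _ => zero_le_one) s s'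
    simp only [mul_one] at h
    exact mul_nonneg hγ0 h
  have hDnn : ∀ s s', 0 ≤ D s s' := fun s s' => by
    show 0 ≤ γ * ∑ w, μ s w * ∑ a, π w s a * P s a s' * (1 - β w s')
    exact mul_nonneg hγ0 (key_nonneg (fun w s₀ => 1 - β w s₀)
      (fun w s₀ => by show (0:ℝ) ≤ 1 - β w s₀; linarith [hβ1 w s₀]) s s')
  have hDtnn : ∀ s s', 0 ≤ Dt s s' := fun s s' => by
    show 0 ≤ γ * ∑ w, μ s w * ∑ a, π w s a * P s a s' * (1 - βt w s')
    exact mul_nonneg hγ0 (key_nonneg (fun w s₀ => 1 - βt w s₀)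
      (fun w s₀ => by show (0:ℝ) ≤ 1 - βt w s₀; linarith [hβt1 w s₀]) s s')
  have hQrow : ∀ s, ∑ s', Q s s' ≤ γ := by
    intro s
    have : ∑ s', Q s s' = γ * ∑ s', ∑ w, μ s w * ∑ a, π w s a * P s a s' := by
      rw [Finset.mul_sum]; rfl
    rw [this, key_mass s, mul_one]
  have hDrow : ∀ s, ∑ s', D s s' ≤ γ := by
    intro s
    have h1 : ∑ s', D s s' = γ * ∑ s', ∑ w, μ s w * ∑ a, π w s a * P s a s' * (1 - β w s') := by
      rw [Finset.mul_sum]; rfl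
    rw [h1]
    calc γ * ∑ s', ∑ w, μ s w * ∑ a, π w s a * P s a s' * (1 - β w s')
        ≤ γ * 1 := mul_le_mul_of_nonneg_left
          (key_le_one (fun w s₀ => 1 - β w s₀) (fun w s₀ => by show (0:ℝ) ≤ 1 - β w s₀; linarith [hβ1 w s₀])
            (fun w s₀ => by show 1 - β w s₀ ≤ (1:ℝ); linarith [hβ0 w s₀]) s) hγ0
      _ = γ := mul_one γ
  have hDtrow : ∀ s, ∑ s', Dt s s' ≤ γ := by
    intro s
    have h1 : ∑ s', Dt s s' = γ * ∑ s', ∑ w, μ s w * ∑ a, π w s a * P s a s' * (1 - βt w s') := by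
      rw [Finset.mul_sum]; rfl
    rw [h1]
    calc γ * ∑ s', ∑ w, μ s w * ∑ a, π w s a * P s a s' * (1 - βt w s')
        ≤ γ * 1 := mul_le_mul_of_nonneg_left
          (key_le_one (fun w s₀ => 1 - βt w s₀) (fun w s₀ => by show (0:ℝ) ≤ 1 - βt w s₀; linarith [hβt1 w s₀])
            (fun w s₀ => by show 1 - βt w s₀ ≤ (1:ℝ); linarith [hβt0 w s₀]) s) hγ0
      _ = γ := mul_one γ
  -- invertibility
  have hMunit : IsUnit M.det := by rw [hMD]; exact unit_one_sub D hDnn hγ1 hDrow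
  have hMtunit : IsUnit Mt.det := by rw [hMtD]; exact unit_one_sub Dt hDtnn hγ1 hDtrow
  have hMinv_nn : ∀ i j, 0 ≤ M⁻¹ i j := by
    rw [hMD]; exact inv_entries_nonneg D hDnn hγ1 hDrow
  have hMtinv_nn : ∀ i j, 0 ≤ Mt⁻¹ i j := by
    rw [hMtD]; exact inv_entries_nonneg Dt hDtnn hγ1 hDtrow
  have hMinv_ones : ∀ i, 1 ≤ (M⁻¹ *ᵥ fun _ => (1:ℝ)) i := by
    rw [hMD]; exact inv_ones_ge_one D hDnn hγ1 hDrow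
  have hMtinv_ones : ∀ i, 1 ≤ (Mt⁻¹ *ᵥ fun _ => (1:ℝ)) i := by
    rw [hMtD]; exact inv_ones_ge_one Dt hDtnn hγ1 hDtrow
  -- row sums of N vs M
  have hNrow_rel : ∀ s, ∑ s', N s s' = (∑ s', M s s') + (γ - 1) := by
    intro s
    have hb := key_add β s
    have hNr : ∑ s', N s s' = γ * ∑ s', ∑ w, μ s w * ∑ a, π w s a * P s a s' * β w s' := by
      simp only [hN]; rw [Finset.mul_sum]
    have hone : ∑ s', (1 : Matrix S S ℝ) s s' = 1 := by
      simp [Matrix.one_apply]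
    have hMr : ∑ s', M s s' =
        1 - γ * ∑ s', ∑ w, μ s w * ∑ a, π w s a * P s a s' * (1 - β w s') := by
      simp only [hM]
      rw [Finset.sum_sub_distrib, hone, Finset.mul_sum]
    rw [hNr, hMr]
    nlinarith [hb]
  have hNtrow_rel : ∀ s, ∑ s', Nt s s' = (∑ s', Mt s s') + (γ - 1) := by
    intro s
    have hb := key_add βt s
    have hNr : ∑ s', Nt s s' = γ * ∑ s', ∑ w, μ s w * ∑ a, π w s a * P s a s' * βt w s' := by
      simp only [hNt]; rw [Finset.mul_sum]
    have hone : ∑ s', (1 : Matrix S S ℝ) s s' = 1 := by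
      simp [Matrix.one_apply]
    have hMr : ∑ s', Mt s s' =
        1 - γ * ∑ s', ∑ w, μ s w * ∑ a, π w s a * P s a s' * (1 - βt w s') := by
      simp only [hMt]
      rw [Finset.sum_sub_distrib, hone, Finset.mul_sum]
    rw [hNr, hMr]
    nlinarith [hb]
  -- row sums of C = M⁻¹ * N are at most γ
  have hCrow_gen : ∀ (M' N' : Matrix S S ℝ), IsUnit M'.det →
      (∀ i, 1 ≤ (M'⁻¹ *ᵥ fun _ => (1:ℝ)) i) →
      (∀ s, ∑ s', N' s s' = (∑ s', M' s s') + (γ - 1)) →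
      ∀ s, ∑ s', (M'⁻¹ * N') s s' ≤ γ := by
    intro M' N' hunit hones hrel s
    have h1 : ∑ s', (M'⁻¹ * N') s s' = ((M'⁻¹ * N') *ᵥ fun _ => (1:ℝ)) s := by
      simp [Matrix.mulVec, dotProduct]
    rw [h1, ← Matrix.mulVec_mulVec]
    have h2 : (N' *ᵥ fun _ => (1:ℝ)) = (M' *ᵥ fun _ => (1:ℝ)) + fun _ => (γ - 1) := by
      funext s₀
      have h3 := hrel s₀
      simp only [Matrix.mulVec, dotProduct, mul_one, Pi.add_apply]
      simpa using h3
    rw [h2, Matrix.mulVec_add]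
    have h3 : M'⁻¹ *ᵥ (M' *ᵥ fun _ => (1:ℝ)) = fun _ => (1:ℝ) := by
      rw [Matrix.mulVec_mulVec, Matrix.nonsing_inv_mul _ hunit, Matrix.one_mulVec]
    rw [h3]
    have h4 : (M'⁻¹ *ᵥ fun _ => (γ - 1)) s = (γ - 1) * (M'⁻¹ *ᵥ fun _ => (1:ℝ)) s := by
      simp only [Matrix.mulVec, dotProduct, mul_one]
      rw [Finset.mul_sum]
      exact Finset.sum_congr rfl fun j _ => by ring
    have h5 : (γ - 1) * (M'⁻¹ *ᵥ fun _ => (1:ℝ)) s ≤ (γ - 1) * 1 := by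
      have := hones s
      nlinarith
    have h6 := hones s
    simp only [Pi.add_apply]
    rw [h4]
    nlinarith
  have hCrow := hCrow_gen M N hMunit hMinv_ones hNrow_rel
  have hCtrow := hCrow_gen Mt Nt hMtunit hMtinv_ones hNtrow_rel
  have hCnn : ∀ i j, 0 ≤ (M⁻¹ * N) i j := mul_entry_nonneg hMinv_nn hNnn
  have hCtnn : ∀ i j, 0 ≤ (Mt⁻¹ * Nt) i j := mul_entry_nonneg hMtinv_nn hNtnn
  have hCle : specRad (M⁻¹ * N) ≤ γ := specRad_le_rowsum hCnn hγ0 hCrow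
  have hCtle : specRad (Mt⁻¹ * Nt) ≤ γ := specRad_le_rowsum hCtnn hγ0 hCtrow
  refine ⟨?_, lt_of_le_of_lt hCle hγ1⟩
  rcases isEmpty_or_nonempty S with hS | hS
  · rw [specRad_of_isEmpty, specRad_of_isEmpty]
  -- the nontrivial comparison
  have hAunit : IsUnit ((1 : Matrix S S ℝ) - Q).det := unit_one_sub Q hQnn hγ1 hQrow
  have hAinv_nn : ∀ i j, 0 ≤ ((1 : Matrix S S ℝ) - Q)⁻¹ i j :=
    inv_entries_nonneg Q hQnn hγ1 hQrow
  set B : Matrix S S ℝ := ((1 : Matrix S S ℝ) - Q)⁻¹ * N with hB_def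
  set Bt : Matrix S S ℝ := ((1 : Matrix S S ℝ) - Q)⁻¹ * Nt with hBt_def
  have hBnn : ∀ i j, 0 ≤ B i j := mul_entry_nonneg hAinv_nn hNnn
  have hBtnn : ∀ i j, 0 ≤ Bt i j := mul_entry_nonneg hAinv_nn hNtnn
  have hBtB : ∀ i j, Bt i j ≤ B i j := by
    intro i j
    rw [hB_def, hBt_def, Matrix.mul_apply, Matrix.mul_apply]
    exact Finset.sum_le_sum fun k _ =>
      mul_le_mul_of_nonneg_left (hNtle k j) (hAinv_nn i k)
  have hrBtB : specRad Bt ≤ specRad B := specRad_mono hBtnn hBtB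
  -- algebraic identities
  have hMAN : M = ((1 : Matrix S S ℝ) - Q) + N := by rw [hMD, hND]; abel
  have hMtAN : Mt = ((1 : Matrix S S ℝ) - Q) + Nt := by rw [hMtD, hNtD]; abel
  have hAB : ((1 : Matrix S S ℝ) - Q) * B = N := by
    rw [hB_def, ← Matrix.mul_assoc, Matrix.mul_nonsing_inv _ hAunit, Matrix.one_mul]
  have hABt : ((1 : Matrix S S ℝ) - Q) * Bt = Nt := by
    rw [hBt_def, ← Matrix.mul_assoc, Matrix.mul_nonsing_inv _ hAunit, Matrix.one_mul]
  have hMC : M * (M⁻¹ * N) = N := by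
    rw [← Matrix.mul_assoc, Matrix.mul_nonsing_inv _ hMunit, Matrix.one_mul]
  have hMtCt : Mt * (Mt⁻¹ * Nt) = Nt := by
    rw [← Matrix.mul_assoc, Matrix.mul_nonsing_inv _ hMtunit, Matrix.one_mul]
  -- complexification
  set F : Matrix S S ℝ →+* Matrix S S ℂ := (algebraMap ℝ ℂ).mapMatrix with hF_def
  have hdet_ne : ∀ X : Matrix S S ℝ, IsUnit X.det → (F X).det ≠ 0 := by
    intro X hu
    have h := ((algebraMap ℝ ℂ).map_det X).symm
    rw [RingHom.mapMatrix_apply] at h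
    rw [hF_def, RingHom.mapMatrix_apply, h]
    intro hh
    rw [show (algebraMap ℝ ℂ) X.det = ((X.det : ℝ) : ℂ) from rfl, Complex.ofReal_eq_zero] at hh
    exact (isUnit_iff_ne_zero.mp hu) hh
  have hdetA : (F ((1 : Matrix S S ℝ) - Q)).det ≠ 0 := hdet_ne _ hAunit
  have hdetM : (F M).det ≠ 0 := hdet_ne _ hMunit
  have hdetMt : (F Mt).det ≠ 0 := hdet_ne _ hMtunit
  -- Perron for Ct and the spectrum mapping
  set rCt := specRad (Mt⁻¹ * Nt) with hrCt_def
  have hrCt0 : 0 ≤ rCt := specRad_nonneg _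
  have h1m : (0:ℝ) < 1 - rCt := by
    have : rCt ≤ γ := hCtle
    linarith
  set lamt := rCt / (1 - rCt) with hlamt_def
  have hlamt0 : 0 ≤ lamt := div_nonneg hrCt0 h1m.le
  have hPerronCt := specRad_mem_spectrum (Mt⁻¹ * Nt) hCtnn
  have hdet1 : ((rCt:ℂ) • (1 : Matrix S S ℂ) - F (Mt⁻¹ * Nt)).det = 0 :=
    (mem_spectrum_iff_det (F (Mt⁻¹ * Nt)) _).mp hPerronCt
  have hzCt : (rCt : ℂ) ≠ 1 := by
    intro h
    have : rCt = 1 := by exact_mod_cast h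
    linarith
  have hlam1 : (lamt : ℂ) * (1 - (rCt:ℂ)) = (rCt:ℂ) := by
    have hre : lamt * (1 - rCt) = rCt := div_mul_cancel₀ rCt (ne_of_gt h1m)
    calc (lamt : ℂ) * (1 - (rCt:ℂ)) = ((lamt * (1 - rCt) : ℝ) : ℂ) := by push_cast; ring
      _ = (rCt : ℂ) := by rw [hre]
  have hiff1 := det_shift_iff
    (Ac := F ((1 : Matrix S S ℝ) - Q)) (Mc := F Mt) (Nc := F Nt)
    (Bc := F Bt) (Cc := F (Mt⁻¹ * Nt))
    (by rw [← _root_.map_add]; exact congrArg F hMtAN)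
    (by rw [← _root_.map_mul]; exact congrArg F hABt)
    (by rw [← _root_.map_mul]; exact congrArg F hMtCt)
    hdetA hdetMt hzCt hlam1
  have hdet2 : ((lamt:ℂ) • (1 : Matrix S S ℂ) - F Bt).det = 0 := hiff1.mp hdet1
  have hmemBt : (lamt:ℂ) ∈ spectrum ℂ (Bt.map (algebraMap ℝ ℂ)) :=
    (mem_spectrum_iff_det (F Bt) _).mpr hdet2
  have hlamt_le : lamt ≤ specRad Bt := by
    have h := norm_le_specRad_of_mem hmemBt
    rwa [Complex.norm_real, Real.norm_eq_abs, abs_of_nonneg hlamt0] at h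
  -- Perron for B and reverse mapping
  set rB := specRad B with hrB_def
  have hrB0 : 0 ≤ rB := specRad_nonneg _
  have hPerronB := specRad_mem_spectrum B hBnn
  have hdet3 : ((rB:ℂ) • (1 : Matrix S S ℂ) - F B).det = 0 :=
    (mem_spectrum_iff_det (F B) _).mp hPerronB
  set z' := rB / (1 + rB) with hz'_def
  have h1pB : (0:ℝ) < 1 + rB := by linarith
  have hz'lt1 : z' < 1 := by rw [hz'_def, div_lt_one h1pB]; linarith
  have hz'0 : 0 ≤ z' := div_nonneg hrB0 h1pB.le
  have hzC : (z' : ℂ) ≠ 1 := by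
    intro h
    have : z' = 1 := by exact_mod_cast h
    linarith
  have hlam2 : (rB : ℂ) * (1 - (z':ℂ)) = (z':ℂ) := by
    have hre : rB * (1 - z') = z' := by
      rw [hz'_def]
      field_simp
      ring
    calc (rB : ℂ) * (1 - (z':ℂ)) = ((rB * (1 - z') : ℝ) : ℂ) := by push_cast; ring
      _ = (z' : ℂ) := by rw [hre]
  have hiff2 := det_shift_iff
    (Ac := F ((1 : Matrix S S ℝ) - Q)) (Mc := F M) (Nc := F N)
    (Bc := F B) (Cc := F (M⁻¹ * N))
    (by rw [← _root_.map_add]; exact congrArg F hMAN)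
    (by rw [← _root_.map_mul]; exact congrArg F hAB)
    (by rw [← _root_.map_mul]; exact congrArg F hMC)
    hdetA hdetM hzC hlam2
  have hdet4 : ((z':ℂ) • (1 : Matrix S S ℂ) - F (M⁻¹ * N)).det = 0 := hiff2.mpr hdet3
  have hmemC : (z':ℂ) ∈ spectrum ℂ ((M⁻¹ * N).map (algebraMap ℝ ℂ)) :=
    (mem_spectrum_iff_det (F (M⁻¹ * N)) _).mpr hdet4
  have hz'_le : z' ≤ specRad (M⁻¹ * N) := by
    have h := norm_le_specRad_of_mem hmemC
    rwa [Complex.norm_real, Real.norm_eq_abs, abs_of_nonneg hz'0] at h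
  -- conclude
  have hlamt_le' : lamt ≤ rB := le_trans hlamt_le hrBtB
  have hkey : rCt * (1 + lamt) = lamt := by
    rw [hlamt_def]
    field_simp
    ring
  have hfinal : rCt ≤ z' := by
    rw [hz'_def, le_div_iff₀ h1pB]
    nlinarith [hkey, hlamt_le', hrCt0, hlamt0, h1m]
  exact le_trans hfinal hz'_le
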